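/- arXiv:1302.3636 — 3 statements merged into one kernel-verified Lean document; each statement's English description precedes it below -/
import Mathlib

section
/- Define lex(S) = ∑_{ℓ=1}^k ∑_{j=i_{ℓ−1}+1}^{i_ℓ−1} C(n−j, k−ℓ) for a k-set S = {i₁ < ⋯ < i_k} ⊆ {1,…,n} (with i₀ = 0). If S ⪰ T in the shift order, then lex(S) ≤ lex(T). -/
/-- Shift order: `shiftGE S T` means `S ⪰ T`, i.e. the ℓ-th smallest element of `S`
is at most the ℓ-th smallest element of `T`, for every ℓ. -/
def shiftGE (S T : Finset ℕ) : Prop :=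
  List.Forall₂ (· ≤ ·) (Finset.sort S (· ≤ ·)) (Finset.sort T (· ≤ ·))

/-- The `(t+1)`-st smallest element of `S` (0-indexed). -/
def nthSmall (S : Finset ℕ) (t : ℕ) : ℕ := (Finset.sort S (· ≤ ·)).getD t 0

/-- The lexicographic rank of a `k`-set `S ⊆ {1,…,n}`. -/
def lexRank (n k : ℕ) (S : Finset ℕ) : ℕ :=
  ∑ ℓ ∈ Finset.range k,
    ∑ j ∈ Finset.Ioo (if ℓ = 0 then 0 else nthSmall S (ℓ - 1)) (nthSmall S ℓ),
      (n - j).choose (k - (ℓ + 1))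

/-- Hockey-stick identity in subtraction-free form. -/
lemma hockey (n r s : ℕ) : ∀ b, s ≤ b → b ≤ n + 1 →
    (∑ j ∈ Finset.Ico s b, (n - j).choose r) + (n + 1 - b).choose (r + 1)
      = (n + 1 - s).choose (r + 1) := by
  intro b hsb
  induction b, hsb using Nat.le_induction with
  | base => intro _; simp
  | succ b hb ih =>
    intro hbn
    have hbn' : b ≤ n + 1 := by omega
    rw [Finset.sum_Ico_succ_top hb, Nat.succ_sub_succ, add_assoc,
      show (n - b).choose r + (n - b).choose (r + 1)
          = ((n - b) + 1).choose (r + 1) from (Nat.choose_succ_succ' _ _).symm,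
      show (n - b) + 1 = n + 1 - b by omega]
    exact ih hbn'

lemma nthSmall_mem {n k : ℕ} {S : Finset ℕ} (hS : S ⊆ Finset.Icc 1 n)
    (hSc : S.card = k) {ℓ : ℕ} (hℓ : ℓ < k) :
    1 ≤ nthSmall S ℓ ∧ nthSmall S ℓ ≤ n := by
  have hlen : (Finset.sort S (· ≤ ·)).length = k := by
    rw [Finset.length_sort, hSc]
  have hℓ' : ℓ < (Finset.sort S (· ≤ ·)).length := by omega
  have : nthSmall S ℓ = (Finset.sort S (· ≤ ·)).get ⟨ℓ, hℓ'⟩ := by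
    simp [nthSmall, List.getD, List.getElem?_eq_getElem hℓ']
  have hmem : (Finset.sort S (· ≤ ·)).get ⟨ℓ, hℓ'⟩ ∈ S := by
    rw [← Finset.mem_sort (r := (· ≤ ·))]; exact List.get_mem _ _
  have := Finset.mem_Icc.mp (hS hmem)
  omega

lemma nthSmall_strict {k : ℕ} {S : Finset ℕ} (hSc : S.card = k)
    {ℓ : ℕ} (hℓ : ℓ + 1 < k) : nthSmall S ℓ < nthSmall S (ℓ + 1) := by
  have hlen : (Finset.sort S (· ≤ ·)).length = k := by
    rw [Finset.length_sort, hSc]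
  have h1 : ℓ < (Finset.sort S (· ≤ ·)).length := by omega
  have h2 : ℓ + 1 < (Finset.sort S (· ≤ ·)).length := by omega
  have e1 : nthSmall S ℓ = (Finset.sort S (· ≤ ·)).get ⟨ℓ, h1⟩ := by
    simp [nthSmall, List.getD, List.getElem?_eq_getElem h1]
  have e2 : nthSmall S (ℓ + 1) = (Finset.sort S (· ≤ ·)).get ⟨ℓ + 1, h2⟩ := by
    simp [nthSmall, List.getD, List.getElem?_eq_getElem h2]
  rw [e1, e2]
  exact (Finset.sortedLT_sort S).strictMono_get (show (⟨ℓ, h1⟩ : Fin _) < ⟨ℓ + 1, h2⟩ from Nat.lt_succ_self ℓ)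

/-- The key closed form: `lexRank n k S + ∑ C(n - iℓ, k - ℓ) + 1 = C(n,k)`. -/
lemma lexRank_key (n k : ℕ) (S : Finset ℕ) (hS : S ⊆ Finset.Icc 1 n)
    (hSc : S.card = k) :
    lexRank n k S + (∑ ℓ ∈ Finset.range k, (n - nthSmall S ℓ).choose (k - ℓ)) + 1
      = n.choose k := by
  cases k with
  | zero => simp [lexRank]
  | succ K =>
    set k := K + 1 with hk
    have step1 : lexRank n k S
        + ∑ ℓ ∈ Finset.range k, (n + 1 - nthSmall S ℓ).choose (k - ℓ)
        = ∑ ℓ ∈ Finset.range k,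
            (n - (if ℓ = 0 then 0 else nthSmall S (ℓ - 1))).choose (k - ℓ) := by
      rw [lexRank, ← Finset.sum_add_distrib]
      refine Finset.sum_congr rfl fun ℓ hℓ => ?_
      rw [Finset.mem_range] at hℓ
      set a := if ℓ = 0 then 0 else nthSmall S (ℓ - 1) with ha
      have hbounds := nthSmall_mem hS hSc hℓ
      have hab : a < nthSmall S ℓ := by
        rcases Nat.eq_zero_or_pos ℓ with h0 | h0
        · have : a = 0 := by rw [ha, h0]; rfl
          omega
        · have e : ℓ - 1 + 1 = ℓ := by omega
          have hlt := nthSmall_strict hSc (ℓ := ℓ - 1) (by omega)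
          rw [e] at hlt
          have : a = nthSmall S (ℓ - 1) := by rw [ha, if_neg (by omega)]
          omega
      have hr : k - (ℓ + 1) + 1 = k - ℓ := by omega
      have := hockey n (k - (ℓ + 1)) (a + 1) (nthSmall S ℓ) (by omega) (by omega)
      rw [hr] at this
      rw [show Finset.Ioo a (nthSmall S ℓ) = Finset.Ico (a + 1) (nthSmall S ℓ) by
        ext x; simp only [Finset.mem_Ioo, Finset.mem_Ico]; omega, this]
      congr 1
      omega
    have step2 : ∑ ℓ ∈ Finset.range k, (n + 1 - nthSmall S ℓ).choose (k - ℓ)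
        = (∑ ℓ ∈ Finset.range k, (n - nthSmall S ℓ).choose (k - ℓ))
          + ∑ ℓ ∈ Finset.range k, (n - nthSmall S ℓ).choose (k - (ℓ + 1)) := by
      rw [← Finset.sum_add_distrib]
      refine Finset.sum_congr rfl fun ℓ hℓ => ?_
      rw [Finset.mem_range] at hℓ
      have hbounds := nthSmall_mem hS hSc hℓ
      have h1 : n + 1 - nthSmall S ℓ = (n - nthSmall S ℓ) + 1 := by omega
      have h2 : k - ℓ = (k - (ℓ + 1)) + 1 := by omega
      rw [h1, h2, Nat.choose_succ_succ']
      omega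
    have step3 : ∑ ℓ ∈ Finset.range k, (n - nthSmall S ℓ).choose (k - (ℓ + 1))
        = (∑ ℓ ∈ Finset.range K, (n - nthSmall S ℓ).choose (k - (ℓ + 1))) + 1 := by
      rw [Finset.sum_range_succ]
      congr 1
      simp [hk]
    have step4 : ∑ ℓ ∈ Finset.range k,
          (n - (if ℓ = 0 then 0 else nthSmall S (ℓ - 1))).choose (k - ℓ)
        = (∑ ℓ ∈ Finset.range K, (n - nthSmall S ℓ).choose (k - (ℓ + 1)))
          + n.choose k := by
      rw [Finset.sum_range_succ']
      simp
    rw [step2, step3] at step1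
    rw [step4] at step1
    omega
    
theorem stmt_8 (n k : ℕ) (S T : Finset ℕ)
    (hS : S ⊆ Finset.Icc 1 n) (hT : T ⊆ Finset.Icc 1 n)
    (hSc : S.card = k) (hTc : T.card = k) (hST : shiftGE S T) :
    lexRank n k S ≤ lexRank n k T := by
  have hkeyS := lexRank_key n k S hS hSc
  have hkeyT := lexRank_key n k T hT hTc
  have hlenS : (Finset.sort S (· ≤ ·)).length = k := by
    rw [Finset.length_sort, hSc]
  have hlenT : (Finset.sort T (· ≤ ·)).length = k := by
    rw [Finset.length_sort, hTc]
  obtain ⟨-, hget⟩ := List.forall₂_iff_get.mp hST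
  have hF : (∑ ℓ ∈ Finset.range k, (n - nthSmall T ℓ).choose (k - ℓ))
      ≤ ∑ ℓ ∈ Finset.range k, (n - nthSmall S ℓ).choose (k - ℓ) := by
    refine Finset.sum_le_sum fun ℓ hℓ => ?_
    rw [Finset.mem_range] at hℓ
    have h1 : ℓ < (Finset.sort S (· ≤ ·)).length := by omega
    have h2 : ℓ < (Finset.sort T (· ≤ ·)).length := by omega
    have hle : nthSmall S ℓ ≤ nthSmall T ℓ := by
      have := hget ℓ h1 h2
      simpa [nthSmall, List.getD, List.getElem?_eq_getElem h1,
        List.getElem?_eq_getElem h2] using this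
    exact Nat.choose_le_choose _ (Nat.sub_le_sub_left hle n)
  omega
end

section
/- For a k-set S = {i₁ < i₂ < ⋯ < i_k} ⊆ {1,…,n}, let L_k(S) = |{T ∈ C([n],k) : T ⪰ S}| and, for j ≤ k, let L_j(S) = |{T ∈ C([n],j) : T ⪰ {i₁,…,i_j}}| (shift order on j-sets). Then L_k(S) = C(i_k, k) − C(i_k − i₁, k) − ∑_{ℓ=1}^{k−2} L_ℓ(S) · C(i_k − i_{ℓ+1}, k − ℓ). -/
/-- The number of `j`-subsets of `{1,…,n}` to the left of `S` in the shift order. -/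
noncomputable def Lnum (n j : ℕ) (S : Finset ℕ) : ℕ :=
  Nat.card {T : Finset ℕ // T ⊆ Finset.Icc 1 n ∧ T.card = j ∧ shiftGE T S}

/-- The set of the `j` smallest elements of `S`. -/
def firstEls (S : Finset ℕ) (j : ℕ) : Finset ℕ :=
  ((Finset.sort S (· ≤ ·)).take j).toFinset

instance (S T : Finset ℕ) : Decidable (shiftGE S T) :=
  inferInstanceAs (Decidable (List.Forall₂ (· ≤ ·) (Finset.sort S (· ≤ ·)) (Finset.sort T (· ≤ ·))))

lemma nth_eq_getElem (S : Finset ℕ) (t : ℕ) (h : t < S.card) :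
    nthSmall S t = (Finset.sort S (· ≤ ·))[t]'(by rwa [Finset.length_sort]) := by
  rw [nthSmall, List.getD_eq_getElem]

lemma nth_mem (S : Finset ℕ) (t : ℕ) (h : t < S.card) : nthSmall S t ∈ S := by
  rw [nth_eq_getElem S t h, ← Finset.mem_sort (· ≤ ·)]
  exact List.getElem_mem _

lemma nth_lt_nth (S : Finset ℕ) {s t : ℕ} (hst : s < t) (h : t < S.card) :
    nthSmall S s < nthSmall S t := by
  rw [nth_eq_getElem S s (hst.trans h), nth_eq_getElem S t h]
  exact List.SortedLT.strictMono_get (Finset.sortedLT_sort S) (by simpa using hst)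

lemma nth_le_nth (S : Finset ℕ) {s t : ℕ} (hst : s ≤ t) (h : t < S.card) :
    nthSmall S s ≤ nthSmall S t := by
  rcases hst.lt_or_eq with h' | rfl
  · exact (nth_lt_nth S h' h).le
  · rfl

lemma shiftGE_iff {T S : Finset ℕ} :
    shiftGE T S ↔ T.card = S.card ∧ ∀ r < S.card, nthSmall T r ≤ nthSmall S r := by
  rw [shiftGE, List.forall₂_iff_get]
  have hT : (Finset.sort T (· ≤ ·)).length = T.card := Finset.length_sort _
  have hS : (Finset.sort S (· ≤ ·)).length = S.card := Finset.length_sort _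
  constructor
  · rintro ⟨h1, h2⟩
    have hc : T.card = S.card := by rw [← hT, ← hS, h1]
    refine ⟨hc, fun r hr => ?_⟩
    rw [nth_eq_getElem T r (hc ▸ hr), nth_eq_getElem S r hr]
    exact h2 r _ _
  · rintro ⟨hc, h2⟩
    refine ⟨by rw [hT, hS, hc], fun i h₁ h₂ => ?_⟩
    have := h2 i (by rwa [hS] at h₂)
    rw [nth_eq_getElem T i (by rwa [hT] at h₁), nth_eq_getElem S i (by rwa [hS] at h₂)] at this
    simpa using this

lemma mem_le_max {T : Finset ℕ} {x : ℕ} (hx : x ∈ T) : x ≤ nthSmall T (T.card - 1) := by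
  have hx' : x ∈ Finset.sort T (· ≤ ·) := (Finset.mem_sort _).2 hx
  obtain ⟨r, hr, hxr⟩ := List.getElem_of_mem hx'
  have hrc : r < T.card := by rwa [Finset.length_sort] at hr
  have hc : 0 < T.card := Nat.zero_lt_of_lt hrc
  calc x = nthSmall T r := by rw [nth_eq_getElem T r hrc, hxr]
  _ ≤ nthSmall T (T.card - 1) := nth_le_nth T (by omega) (by omega)

lemma sort_union {A B : Finset ℕ} (hAB : ∀ a ∈ A, ∀ b ∈ B, a < b) :
    Finset.sort (A ∪ B) (· ≤ ·) = Finset.sort A (· ≤ ·) ++ Finset.sort B (· ≤ ·) := by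
  have hnd : (Finset.sort A (· ≤ ·) ++ Finset.sort B (· ≤ ·)).Nodup :=
    (Finset.sort_nodup _ _).append (Finset.sort_nodup _ _)
      (fun a ha hb => (hAB a ((Finset.mem_sort _).1 ha) a ((Finset.mem_sort _).1 hb)).ne rfl)
  have hsorted : (Finset.sort A (· ≤ ·) ++ Finset.sort B (· ≤ ·)).Pairwise (· ≤ ·) := by
    rw [List.pairwise_append]
    exact ⟨Finset.pairwise_sort _ _, Finset.pairwise_sort _ _,
      fun a ha b hb => (hAB a ((Finset.mem_sort _).1 ha) b ((Finset.mem_sort _).1 hb)).le⟩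
  have := (List.toFinset_sort (· ≤ ·) hnd).2 hsorted
  rwa [List.toFinset_append, Finset.sort_toFinset, Finset.sort_toFinset] at this

lemma sort_firstEls (S : Finset ℕ) (j : ℕ) :
    Finset.sort (firstEls S j) (· ≤ ·) = (Finset.sort S (· ≤ ·)).take j := by
  have hnd : ((Finset.sort S (· ≤ ·)).take j).Nodup :=
    (Finset.sort_nodup _ _).sublist (List.take_sublist _ _)
  exact (List.toFinset_sort (· ≤ ·) hnd).2 ((Finset.pairwise_sort _ _).sublist (List.take_sublist _ _))

lemma card_firstEls (S : Finset ℕ) (j : ℕ) : (firstEls S j).card = min j S.card := by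
  rw [← Finset.length_sort (· ≤ ·), sort_firstEls, List.length_take, Finset.length_sort]

lemma nth_firstEls (S : Finset ℕ) {j r : ℕ} (hrj : r < j) (hr : r < S.card) :
    nthSmall (firstEls S j) r = nthSmall S r := by
  have h1 : r < (firstEls S j).card := by rw [card_firstEls]; omega
  rw [nth_eq_getElem _ r h1, nth_eq_getElem _ r hr]
  simp only [sort_firstEls]
  rw [List.getElem_take]

lemma firstEls_subset (S : Finset ℕ) (j : ℕ) : firstEls S j ⊆ S := by
  intro x hx
  rw [firstEls, List.mem_toFinset] at hx
  exact (Finset.mem_sort _).1 (List.take_subset _ _ hx)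

lemma Lnum_eq_card (n j : ℕ) (F : Finset ℕ) :
    Lnum n j F = (((Finset.Icc 1 n).powersetCard j).filter (fun T => shiftGE T F)).card := by
  rw [Lnum, ← Nat.card_eq_finsetCard]
  exact Nat.card_congr (Equiv.subtypeEquivRight (fun T => by
    simp [Finset.mem_filter, Finset.mem_powersetCard, and_assoc]))

lemma Lnum_eq_card_trim (n k : ℕ) (hk : 1 ≤ k) (S : Finset ℕ)
    (hS : S ⊆ Finset.Icc 1 n) (hSc : S.card = k) :
    Lnum n k S = (((Finset.Icc 1 (nthSmall S (k - 1))).powersetCard k).filter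
      (fun T => shiftGE T S)).card := by
  have hM : nthSmall S (k - 1) ∈ Finset.Icc 1 n := hS (nth_mem S (k - 1) (by omega))
  rw [Finset.mem_Icc] at hM
  rw [Lnum, ← Nat.card_eq_finsetCard]
  refine Nat.card_congr (Equiv.subtypeEquivRight (fun T => ?_))
  simp only [Finset.mem_filter, Finset.mem_powersetCard]
  constructor
  · rintro ⟨h1, h2, h3⟩
    refine ⟨⟨fun x hx => ?_, h2⟩, h3⟩
    have hx1 := h1 hx
    rw [Finset.mem_Icc] at *
    obtain ⟨hc, hnth⟩ := shiftGE_iff.1 h3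
    refine ⟨hx1.1, le_trans (le_trans (mem_le_max hx) ?_) (hnth (k-1) (by omega))⟩
    rw [h2]
  · rintro ⟨⟨h1, h2⟩, h3⟩
    refine ⟨fun x hx => ?_, h2, h3⟩
    have := h1 hx
    rw [Finset.mem_Icc] at *
    omega

def fIdx (S T : Finset ℕ) (k : ℕ) : ℕ :=
  Nat.findGreatest (fun r => ∀ s < r, nthSmall T s ≤ nthSmall S s) k

lemma fiber_card (n k ℓ : ℕ) (S : Finset ℕ) (hS : S ⊆ Finset.Icc 1 n) (hSc : S.card = k)
    (hℓ : ℓ < k) :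
    (((Finset.Icc 1 (nthSmall S (k - 1))).powersetCard k).filter (fun T => fIdx S T k = ℓ)).card
      = (((Finset.Icc 1 n).powersetCard ℓ).filter (fun T => shiftGE T (firstEls S ℓ))).card
        * (nthSmall S (k - 1) - nthSmall S ℓ).choose (k - ℓ) := by
  set M := nthSmall S (k - 1) with hMdef
  set m := nthSmall S ℓ with hmdef
  have hk : 1 ≤ k := by omega
  have hmM : m ≤ M := nth_le_nth S (by omega) (by omega)
  have hm1 : 1 ≤ m := by
    have := hS (nth_mem S ℓ (by omega)); rw [Finset.mem_Icc] at this; exact this.1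
  have hMn : M ≤ n := by
    have := hS (nth_mem S (k-1) (by omega)); rw [Finset.mem_Icc] at this; exact this.2
  have hcf : (firstEls S ℓ).card = ℓ := by rw [card_firstEls]; omega
  rw [show (M - m).choose (k - ℓ) = ((Finset.Ioc m M).powersetCard (k - ℓ)).card by
      rw [Finset.card_powersetCard, Nat.card_Ioc], ← Finset.card_product]
  apply Finset.card_nbij'
    (i := fun T => (firstEls T ℓ, ((Finset.sort T (· ≤ ·)).drop ℓ).toFinset))
    (j := fun p => p.1 ∪ p.2)
  · -- hi
    intro T hT
    rw [Finset.mem_coe, Finset.mem_filter, Finset.mem_powersetCard] at hT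
    obtain ⟨⟨hTsub, hTc⟩, hf⟩ := hT
    have hp : ∀ s < ℓ, nthSmall T s ≤ nthSmall S s := by
      rcases Nat.eq_zero_or_pos ℓ with h0 | h0
      · omega
      · exact Nat.findGreatest_of_ne_zero hf (by omega)
    have hfail : m < nthSmall T ℓ := by
      by_contra h'
      have hp' : ∀ s < ℓ + 1, nthSmall T s ≤ nthSmall S s := by
        intro s hs
        rcases Nat.lt_or_ge s ℓ with h | h
        · exact hp s h
        · have : s = ℓ := by omega
          subst this; omega
      have := Nat.le_findGreatest (P := fun r => ∀ s < r, nthSmall T s ≤ nthSmall S s)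
        (by omega : ℓ + 1 ≤ k) hp'
      rw [fIdx] at hf; omega
    rw [Finset.mem_coe, Finset.mem_product, Finset.mem_filter, Finset.mem_powersetCard]
    have hcA : (firstEls T ℓ).card = ℓ := by rw [card_firstEls]; omega
    refine ⟨⟨⟨fun x hx => ?_, hcA⟩, ?_⟩, ?_⟩
    · have := hTsub (firstEls_subset T ℓ hx)
      rw [Finset.mem_Icc] at *; omega
    · rw [shiftGE_iff, hcA, hcf]
      refine ⟨rfl, fun r hr => ?_⟩
      rw [nth_firstEls T hr (by omega), nth_firstEls S hr (by omega)]
      exact hp r hr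
    · rw [Finset.mem_powersetCard]
      have hnd : ((Finset.sort T (· ≤ ·)).drop ℓ).Nodup :=
        (Finset.sort_nodup _ _).sublist (List.drop_sublist _ _)
      constructor
      · intro x hx
        rw [List.mem_toFinset] at hx
        obtain ⟨r, hr, hxr⟩ := List.getElem_of_mem hx
        have hlen : (Finset.sort T (· ≤ ·)).length = k := by rw [Finset.length_sort, hTc]
        have hr' : ℓ + r < k := by
          rw [List.length_drop, hlen] at hr; omega
        have hx2 : x = nthSmall T (ℓ + r) := by
          rw [nth_eq_getElem T _ (by omega), ← hxr, List.getElem_drop]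
        have hxT : x ∈ T := by
          rw [← Finset.mem_sort (· ≤ ·)]
          exact List.drop_subset _ _ hx
        have hxM := hTsub hxT
        rw [Finset.mem_Icc] at hxM
        rw [Finset.mem_Ioc]
        refine ⟨lt_of_lt_of_le hfail ?_, hxM.2⟩
        rw [hx2]; exact nth_le_nth T (by omega) (by omega)
      · rw [List.toFinset_card_of_nodup hnd, List.length_drop, Finset.length_sort, hTc]
  · -- hj
    intro p hp
    rw [Finset.mem_coe, Finset.mem_product, Finset.mem_filter, Finset.mem_powersetCard,
      Finset.mem_powersetCard] at hp
    obtain ⟨⟨⟨hA1, hA2⟩, hA3⟩, hB1, hB2⟩ := hp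
    obtain ⟨A, B⟩ := p
    simp only at *
    have hAlt : ∀ a ∈ A, a < m := by
      intro a ha
      rcases Nat.eq_zero_or_pos ℓ with h0 | h0
      · rw [h0, Finset.card_eq_zero] at hA2; simp [hA2] at ha
      · have h1 : a ≤ nthSmall A (ℓ - 1) := by
          have := mem_le_max ha; rwa [hA2] at this
        have h2 := (shiftGE_iff.1 hA3).2 (ℓ - 1) (by omega)
        rw [nth_firstEls S (by omega : ℓ - 1 < ℓ) (by omega)] at h2
        have h3 : nthSmall S (ℓ - 1) < m := nth_lt_nth S (by omega) (by omega)
        omega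
    have hsep : ∀ a ∈ A, ∀ b ∈ B, a < b := by
      intro a ha b hb
      have := hB1 hb; rw [Finset.mem_Ioc] at this
      exact lt_trans (hAlt a ha) this.1
    have hdisj : Disjoint A B := by
      rw [Finset.disjoint_left]
      intro a ha hb
      exact absurd rfl (hsep a ha a hb).ne
    have hcard : (A ∪ B).card = k := by
      rw [Finset.card_union_of_disjoint hdisj, hA2, hB2]; omega
    have hsort := sort_union hsep
    have hlenA : (Finset.sort A (· ≤ ·)).length = ℓ := by rw [Finset.length_sort, hA2]
    have hnthlt : ∀ r, (hr : r < ℓ) → nthSmall (A ∪ B) r = nthSmall A r := by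
      intro r hr
      rw [nth_eq_getElem _ r (by omega), nth_eq_getElem A r (by omega)]
      simp only [hsort]
      rw [List.getElem_append_left (by omega)]
    have hnthB : nthSmall (A ∪ B) ℓ = nthSmall B 0 := by
      rw [nth_eq_getElem _ ℓ (by omega), nth_eq_getElem B 0 (by omega)]
      simp only [hsort]
      rw [List.getElem_append_right (by omega)]
      congr 1
      omega
    have hB0 : m < nthSmall B 0 := by
      have := hB1 (nth_mem B 0 (by omega))
      rw [Finset.mem_Ioc] at this; exact this.1
    have hpre : ∀ s < ℓ, nthSmall (A ∪ B) s ≤ nthSmall S s := by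
      intro s hs
      rw [hnthlt s hs]
      have := (shiftGE_iff.1 hA3).2 s (by omega)
      rwa [nth_firstEls S hs (by omega)] at this
    rw [Finset.mem_coe, Finset.mem_filter, Finset.mem_powersetCard]
    refine ⟨⟨fun x hx => ?_, hcard⟩, ?_⟩
    · rw [Finset.mem_union] at hx
      rw [Finset.mem_Icc]
      rcases hx with hx | hx
      · have := hA1 hx; rw [Finset.mem_Icc] at this
        exact ⟨this.1, le_trans (le_of_lt (hAlt x hx)) hmM⟩
      · have := hB1 hx; rw [Finset.mem_Ioc] at this
        exact ⟨by omega, this.2⟩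
    · rw [fIdx]
      apply le_antisymm
      · by_contra h'
        push_neg at h'
        have hne : Nat.findGreatest (fun r => ∀ s < r, nthSmall (A ∪ B) s ≤ nthSmall S s) k ≠ 0 :=
          by omega
        have hq := Nat.findGreatest_of_ne_zero rfl hne
        have := hq ℓ h'
        rw [hnthB] at this
        omega
      · exact Nat.le_findGreatest (by omega) hpre
  · -- left_inv
    intro T hT
    simp only
    rw [firstEls, ← List.toFinset_append, List.take_append_drop, Finset.sort_toFinset]
  · -- right_inv
    intro p hp
    rw [Finset.mem_coe, Finset.mem_product, Finset.mem_filter, Finset.mem_powersetCard,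
      Finset.mem_powersetCard] at hp
    obtain ⟨⟨⟨hA1, hA2⟩, hA3⟩, hB1, hB2⟩ := hp
    obtain ⟨A, B⟩ := p
    simp only at *
    have hAlt : ∀ a ∈ A, a < m := by
      intro a ha
      rcases Nat.eq_zero_or_pos ℓ with h0 | h0
      · rw [h0, Finset.card_eq_zero] at hA2; simp [hA2] at ha
      · have h1 : a ≤ nthSmall A (ℓ - 1) := by
          have := mem_le_max ha; rwa [hA2] at this
        have h2 := (shiftGE_iff.1 hA3).2 (ℓ - 1) (by omega)
        rw [nth_firstEls S (by omega : ℓ - 1 < ℓ) (by omega)] at h2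
        have h3 : nthSmall S (ℓ - 1) < m := nth_lt_nth S (by omega) (by omega)
        omega
    have hsep : ∀ a ∈ A, ∀ b ∈ B, a < b := by
      intro a ha b hb
      have := hB1 hb; rw [Finset.mem_Ioc] at this
      exact lt_trans (hAlt a ha) this.1
    have hsort := sort_union hsep
    have hlenA : (Finset.sort A (· ≤ ·)).length = ℓ := by rw [Finset.length_sort, hA2]
    refine Prod.ext ?_ ?_
    · simp only [firstEls, hsort, List.take_left' hlenA, Finset.sort_toFinset]
    · simp only [hsort, List.drop_left' hlenA, Finset.sort_toFinset]

theorem stmt_11 (n k : ℕ) (hk : 1 ≤ k) (S : Finset ℕ)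
    (hS : S ⊆ Finset.Icc 1 n) (hSc : S.card = k) :
    Lnum n k S =
      (nthSmall S (k - 1)).choose k
        - (nthSmall S (k - 1) - nthSmall S 0).choose k
        - ∑ ℓ ∈ Finset.Icc 1 (k - 2),
            Lnum n ℓ (firstEls S ℓ) * (nthSmall S (k - 1) - nthSmall S ℓ).choose (k - ℓ) := by
  set M := nthSmall S (k - 1) with hMdef
  set U := (Finset.Icc 1 M).powersetCard k with hUdef
  set F : ℕ → ℕ := fun ℓ => (U.filter (fun T => fIdx S T k = ℓ)).card with hFdef
  -- total count
  have htot : U.card = M.choose k := by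
    rw [hUdef, Finset.card_powersetCard, Nat.card_Icc]
    congr 1
  -- fiberwise decomposition
  have hfib : U.card = ∑ ℓ ∈ Finset.range (k + 1), F ℓ := by
    apply Finset.card_eq_sum_card_fiberwise
    intro T _
    rw [Finset.mem_coe, Finset.mem_range]
    exact Nat.lt_succ_of_le (Nat.findGreatest_le k)
  -- top fiber
  have htop : F k = Lnum n k S := by
    rw [hFdef, Lnum_eq_card_trim n k hk S hS hSc]
    show (U.filter (fun T => fIdx S T k = k)).card
      = ((Finset.Icc 1 (nthSmall S (k-1))).powersetCard k |>.filter (fun T => shiftGE T S)).card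
    rw [← hMdef, ← hUdef]
    congr 1
    apply Finset.filter_congr
    intro T hT
    rw [hUdef, Finset.mem_powersetCard] at hT
    constructor
    · intro h
      rw [shiftGE_iff, hT.2, hSc]
      exact ⟨rfl, fun r hr => Nat.findGreatest_of_ne_zero h (by omega) r hr⟩
    · intro h
      obtain ⟨-, h2⟩ := shiftGE_iff.1 h
      rw [hSc] at h2
      have h3 := Nat.le_findGreatest (P := fun r => ∀ s < r, nthSmall T s ≤ nthSmall S s) (le_refl k) h2
      have h4 := Nat.findGreatest_le (P := fun r => ∀ s < r, nthSmall T s ≤ nthSmall S s) k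
      rw [fIdx]
      omega
  -- zero fiber value
  have hG0 : (((Finset.Icc 1 n).powersetCard 0).filter
      (fun T => shiftGE T (firstEls S 0))).card = 1 := by
    have h0 : firstEls S 0 = ∅ := by simp [firstEls]
    have hsh : shiftGE ∅ (firstEls S 0) := by
      rw [h0, shiftGE, Finset.sort_empty]
      exact List.Forall₂.nil
    rw [Finset.powersetCard_zero, Finset.filter_singleton, if_pos hsh, Finset.card_singleton]
  have hc0 : F 0 = (M - nthSmall S 0).choose k := by
    rw [hFdef]
    simp only
    rw [fiber_card n k 0 S hS hSc (by omega), hG0, one_mul, Nat.sub_zero]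
  -- the main sum identity
  have hmain : M.choose k = Lnum n k S + ((M - nthSmall S 0).choose k
      + ∑ ℓ ∈ Finset.Icc 1 (k - 2),
          Lnum n ℓ (firstEls S ℓ) * (M - nthSmall S ℓ).choose (k - ℓ)) := by
    rw [← htot, hfib, Finset.sum_range_succ, htop]
    rw [add_comm (∑ ℓ ∈ Finset.range k, F ℓ) (Lnum n k S)]
    congr 1
    have hsum : ∑ ℓ ∈ Finset.range k, F ℓ
        = F 0 + ∑ ℓ ∈ Finset.Ico 1 k, F ℓ := by
      rw [Finset.range_eq_Ico, Finset.sum_eq_sum_Ico_succ_bot (by omega)]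
    rw [hsum, hc0]
    congr 1
    have hIcoTail : ∑ ℓ ∈ Finset.Ico 1 k, F ℓ = ∑ ℓ ∈ Finset.Icc 1 (k - 2), F ℓ := by
      rcases Nat.lt_or_ge k 2 with h2 | h2
      · have : k = 1 := by omega
        subst this
        simp
      · have hFk1 : F (k - 2 + 1) = 0 := by
          have he : k - 2 + 1 = k - 1 := by omega
          rw [he, hFdef]
          simp only
          rw [fiber_card n k (k - 1) S hS hSc (by omega), ← hMdef]
          have h1 : k - (k - 1) = 1 := by omega
          rw [Nat.sub_self, h1, Nat.choose_zero_succ, mul_zero]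
        have e1 : Finset.Ico 1 k = Finset.Ico 1 ((k - 2 + 1) + 1) :=
          congrArg _ (by omega)
        rw [e1, Finset.sum_Ico_succ_top (by omega), hFk1, add_zero, Finset.Ico_add_one_right_eq_Icc]
    rw [hIcoTail]
    apply Finset.sum_congr rfl
    intro ℓ hℓ
    rw [Finset.mem_Icc] at hℓ
    rw [hFdef]
    simp only
    rw [fiber_card n k ℓ S hS hSc (by omega), Lnum_eq_card]
  omega
end

section
/- Let g(m,k) denote the minimum, over all y ∈ ℝᵐ with ∑ yᵢ ≥ 0, of the number of nonnegative k-sums of y. Fix n, k, t with t ≤ C(n−1,k−1) and a k-set S ⊆ {1,…,n} with 1 ∈ S and L_k(S) + g(n−k, k) ≥ t. Then every x ∈ ℝⁿ with x₁ ≥ ⋯ ≥ xₙ, ∑ᵢ xᵢ ≥ 0, and s_k(x) < t satisfies ∑_{i∈S} xᵢ < 0. -/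
/-- `g(m,k)`: the minimum number of nonnegative `k`-sums over all vectors in ℝᵐ
with nonnegative total sum. -/
noncomputable def gMMS (m k : ℕ) : ℕ :=
  sInf {c : ℕ | ∃ y : ℕ → ℝ, 0 ≤ ∑ i ∈ Finset.Icc 1 m, y i ∧
    c = Nat.card {S : Finset ℕ // S ⊆ Finset.Icc 1 m ∧ S.card = k ∧ 0 ≤ ∑ i ∈ S, y i}}

open Finset

private lemma sum_le_of_forall₂' (x : ℕ → ℝ) :
    ∀ {l₁ l₂ : List ℕ}, List.Forall₂ (· ≤ ·) l₁ l₂ →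
    (∀ a b, a ∈ l₁ → b ∈ l₂ → a ≤ b → x b ≤ x a) →
    (l₂.map x).sum ≤ (l₁.map x).sum := by
  intro l₁ l₂ h
  induction h with
  | nil => intro _; simp
  | @cons a b l₁ l₂ hab h ih =>
    intro hx
    simp only [List.map_cons, List.sum_cons]
    exact add_le_add (hx _ _ (by simp) (by simp) hab)
      (ih fun a b ha hb => hx a b (by simp [ha]) (by simp [hb]))

private lemma sum_sort' (s : Finset ℕ) (f : ℕ → ℝ) :
    ((s.sort (· ≤ ·)).map f).sum = ∑ i ∈ s, f i := by
  rw [← Finset.sum_map_toList]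
  exact List.Perm.sum_eq (List.Perm.map f (Finset.sort_perm_toList s (· ≤ ·)))

private lemma shift_sum {n : ℕ} {x : ℕ → ℝ}
    (hmono : ∀ i j, 1 ≤ i → i ≤ j → j ≤ n → x j ≤ x i)
    {T S : Finset ℕ} (hT : T ⊆ Finset.Icc 1 n) (hS : S ⊆ Finset.Icc 1 n)
    (h : List.Forall₂ (· ≤ ·) (Finset.sort T (· ≤ ·)) (Finset.sort S (· ≤ ·))) :
    ∑ i ∈ S, x i ≤ ∑ i ∈ T, x i := by
  rw [← sum_sort', ← sum_sort']
  apply sum_le_of_forall₂' x h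
  intro a b ha hb hab
  have ha' := Finset.mem_Icc.1 (hT ((Finset.mem_sort _).1 ha))
  have hb' := Finset.mem_Icc.1 (hS ((Finset.mem_sort _).1 hb))
  exact hmono a b ha'.1 hab hb'.2

private lemma one_mem_of_shiftGE {n : ℕ} {T S : Finset ℕ} (hT : T ⊆ Finset.Icc 1 n)
    (h1 : 1 ∈ S)
    (h : List.Forall₂ (· ≤ ·) (Finset.sort T (· ≤ ·)) (Finset.sort S (· ≤ ·))) :
    1 ∈ T := by
  have hSne : S.Nonempty := ⟨1, h1⟩
  have hlen := h.length_eq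
  have hSl : 0 < (S.sort (· ≤ ·)).length := by
    rw [Finset.length_sort]; exact Finset.card_pos.2 hSne
  have hTl : 0 < (T.sort (· ≤ ·)).length := by omega
  have hTne : T.Nonempty := by
    rw [Finset.length_sort] at hTl; exact Finset.card_pos.1 hTl
  have hget := h.get hTl hSl
  rw [Finset.sorted_zero_eq_min'_aux T hTl hTne,
      Finset.sorted_zero_eq_min'_aux S hSl hSne] at hget
  have h1' : S.min' hSne ≤ 1 := Finset.min'_le _ _ h1
  have h2' : 1 ≤ T.min' hTne := (Finset.mem_Icc.1 (hT (T.min'_mem hTne))).1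
  have : T.min' hTne = 1 := le_antisymm (le_trans hget h1') h2'
  exact this ▸ T.min'_mem hTne

/-- any `m`-subset of `Icc 1 n` has `x`-sum at least that of the top interval. -/
private lemma topsum (x : ℕ → ℝ) (N : ℕ)
    (hmono : ∀ i j, 1 ≤ i → i ≤ j → j ≤ N → x j ≤ x i) :
    ∀ n, n ≤ N → ∀ A : Finset ℕ, A ⊆ Finset.Icc 1 n →
      ∑ i ∈ Finset.Icc (n - A.card + 1) n, x i ≤ ∑ i ∈ A, x i := by
  intro n
  induction n with
  | zero =>
    intro _ A hA
    have : A = ∅ := Finset.subset_empty.1 (by simpa using hA)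
    subst this; simp
  | succ n ih =>
    intro hN A hA
    have hcard : A.card ≤ n + 1 := by
      have := Finset.card_le_card hA
      simpa using this
    by_cases hm : (n+1) ∈ A
    · set A' := A.erase (n+1) with hA'
      have hA'sub : A' ⊆ Finset.Icc 1 n := by
        intro a ha
        have h₁ := Finset.mem_of_mem_erase ha
        have h₂ := Finset.ne_of_mem_erase ha
        have := Finset.mem_Icc.1 (hA h₁)
        exact Finset.mem_Icc.2 ⟨this.1, by omega⟩
      have hcard' : A'.card = A.card - 1 := by
        rw [hA', Finset.card_erase_of_mem hm]
      have hApos : 1 ≤ A.card := Finset.card_pos.2 ⟨_, hm⟩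
      have ihh := ih (by omega) A' hA'sub
      have hsplitA : ∑ i ∈ A, x i = x (n+1) + ∑ i ∈ A', x i := by
        rw [hA', ← Finset.sum_erase_add A x hm]; ring
      have hint : Finset.Icc (n + 1 - A.card + 1) (n+1)
          = insert (n+1) (Finset.Icc (n + 1 - A.card + 1) n) := by
        rw [Finset.insert_Icc_right_eq_Icc_add_one (by omega)]
      rw [hint, Finset.sum_insert (by simp), hsplitA]
      have : n + 1 - A.card + 1 = n - A'.card + 1 := by omega
      rw [this]
      exact add_le_add_right ihh _
    · have hA2 : A ⊆ Finset.Icc 1 n := by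
        intro a ha
        have := Finset.mem_Icc.1 (hA ha)
        have : a ≠ n + 1 := fun h => hm (h ▸ ha)
        have := Finset.mem_Icc.1 (hA ha)
        exact Finset.mem_Icc.2 ⟨this.1, by omega⟩
      have ihh := ih (by omega) A hA2
      refine le_trans ?_ ihh
      by_cases h0 : A.card = 0
      · rw [h0, Finset.Icc_eq_empty (by omega : ¬ n + 1 - 0 + 1 ≤ n + 1),
            Finset.Icc_eq_empty (by omega : ¬ n - 0 + 1 ≤ n)]
      · have hcard2 : A.card ≤ n := by
          have := Finset.card_le_card hA2
          simpa using this
        have hmap : Finset.Icc (n + 1 - A.card + 1) (n + 1)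
            = (Finset.Icc (n - A.card + 1) n).map (addRightEmbedding 1) := by
          rw [Finset.map_add_right_Icc]
          congr 1
          omega
        rw [hmap, Finset.sum_map]
        apply Finset.sum_le_sum
        intro i hi
        have := Finset.mem_Icc.1 hi
        exact hmono i (i+1) (by omega) (by omega) (by omega)

private lemma natCard_eq_filter (n : ℕ) (P : Finset ℕ → Prop) [DecidablePred P]
    (h : ∀ T, P T → T ⊆ Finset.Icc 1 n) :
    Nat.card {T : Finset ℕ // P T} = ((Finset.Icc 1 n).powerset.filter P).card := by
  rw [← Nat.card_eq_finsetCard]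
  exact Nat.card_congr (Equiv.subtypeEquivRight fun T => by
    simp only [Finset.mem_coe, Finset.mem_filter, Finset.mem_powerset]
    exact ⟨fun hp => ⟨h T hp, hp⟩, fun hp => hp.2⟩)

private lemma choose_le_card (n k : ℕ) (hk : 1 ≤ k) (hn : 1 ≤ n)
    (p : Finset ℕ → Prop) [DecidablePred p]
    (hall : ∀ T, T ⊆ Finset.Icc 1 n → T.card = k → 1 ∈ T → p T) :
    (n-1).choose (k-1) ≤ ((Finset.Icc 1 n).powerset.filter
      (fun T => T ⊆ Finset.Icc 1 n ∧ T.card = k ∧ p T)).card := by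
  have hc2 : (Finset.Icc 2 n).card = n - 1 := by rw [Nat.card_Icc]; omega
  rw [← hc2, ← Finset.card_powersetCard]
  apply Finset.card_le_card_of_injOn (fun A => insert 1 A)
  · intro A hA
    rw [Finset.mem_coe, Finset.mem_powersetCard] at hA
    have h1A : 1 ∉ A := fun h => by have := Finset.mem_Icc.1 (hA.1 h); omega
    have hsub : insert 1 A ⊆ Finset.Icc 1 n := by
      intro a ha
      rcases Finset.mem_insert.1 ha with rfl | ha
      · exact Finset.mem_Icc.2 ⟨le_refl 1, hn⟩
      · have := Finset.mem_Icc.1 (hA.1 ha); exact Finset.mem_Icc.2 ⟨by omega, this.2⟩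
    have hcard : (insert 1 A).card = k := by
      rw [Finset.card_insert_of_notMem h1A, hA.2]; omega
    exact Finset.mem_filter.2 ⟨Finset.mem_powerset.2 hsub, hsub, hcard,
      hall _ hsub hcard (Finset.mem_insert_self 1 A)⟩
  · intro A hA B hB hAB
    rw [Finset.mem_coe, Finset.mem_powersetCard] at hA hB
    have h1A : 1 ∉ A := fun h => by have := Finset.mem_Icc.1 (hA.1 h); omega
    have h1B : 1 ∉ B := fun h => by have := Finset.mem_Icc.1 (hB.1 h); omega
    have := congrArg (fun s => Finset.erase s 1) hAB
    simpa [Finset.erase_insert h1A, Finset.erase_insert h1B] using this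

theorem stmt_15 (n k t : ℕ) (S : Finset ℕ)
    (hS : S ⊆ Finset.Icc 1 n) (hSc : S.card = k) (h1 : 1 ∈ S)
    (ht : t ≤ (n - 1).choose (k - 1))
    (hL : t ≤ Nat.card {T : Finset ℕ // T ⊆ Finset.Icc 1 n ∧ T.card = k ∧ shiftGE T S}
        + gMMS (n - k) k)
    (x : ℕ → ℝ) (hmono : ∀ i j, 1 ≤ i → i ≤ j → j ≤ n → x j ≤ x i)
    (hsum : 0 ≤ ∑ i ∈ Finset.Icc 1 n, x i)
    (hbad : Nat.card {T : Finset ℕ // T ⊆ Finset.Icc 1 n ∧ T.card = k ∧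
      0 ≤ ∑ i ∈ T, x i} < t) :
    ∑ i ∈ S, x i < 0 := by
  classical
  by_contra hcon
  push_neg at hcon
  -- basic bounds
  have hk1 : 1 ≤ k := by
    rcases Nat.eq_zero_or_pos k with h | h
    · exfalso
      have : S = ∅ := Finset.card_eq_zero.1 (by omega)
      simp [this] at h1
    · exact h
  have hkn : k ≤ n := by
    have := Finset.card_le_card hS
    rw [hSc, Nat.card_Icc] at this; omega
  have hn1 : 1 ≤ n := le_trans hk1 hkn
  -- Finset versions of the Nat.card quantities
  rw [natCard_eq_filter n _ (fun T h => h.1)] at hL hbad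
  set F : Finset (Finset ℕ) := (Finset.Icc 1 n).powerset.filter
    (fun T => T ⊆ Finset.Icc 1 n ∧ T.card = k ∧ 0 ≤ ∑ i ∈ T, x i) with hF
  set F1 : Finset (Finset ℕ) := (Finset.Icc 1 n).powerset.filter
    (fun T => T ⊆ Finset.Icc 1 n ∧ T.card = k ∧ shiftGE T S) with hF1
  -- Step 1: the middle segment has nonnegative sum
  have hmid : 0 ≤ ∑ i ∈ Finset.Icc 2 (n - k + 1), x i := by
    by_contra hneg
    push_neg at hneg
    have hsplit : Finset.Icc 1 n
        = insert 1 (Finset.Icc 2 (n - k + 1)) ∪ Finset.Icc (n - k + 2) n := by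
      ext a
      simp only [Finset.mem_Icc, Finset.mem_insert, Finset.mem_union]
      omega
    have hdisj : Disjoint (insert 1 (Finset.Icc 2 (n - k + 1)))
        (Finset.Icc (n - k + 2) n) := by
      rw [Finset.disjoint_left]
      intro a ha hb
      rcases Finset.mem_insert.1 ha with rfl | ha
      · have := Finset.mem_Icc.1 hb; omega
      · have h1 := Finset.mem_Icc.1 ha
        have h2 := Finset.mem_Icc.1 hb; omega
    rw [hsplit, Finset.sum_union hdisj,
        Finset.sum_insert (by simp [Finset.mem_Icc])] at hsum
    have hpos : 0 < x 1 + ∑ i ∈ Finset.Icc (n - k + 2) n, x i := by linarith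
    -- every k-subset of Icc 1 n containing 1 has nonnegative sum
    have hall : ∀ T, T ⊆ Finset.Icc 1 n → T.card = k → 1 ∈ T → 0 ≤ ∑ i ∈ T, x i := by
      intro T hT hTc h1T
      have hTe : T.erase 1 ⊆ Finset.Icc 1 n := fun a ha => hT (Finset.mem_of_mem_erase ha)
      have hTec : (T.erase 1).card = k - 1 := by rw [Finset.card_erase_of_mem h1T, hTc]
      have htop := topsum x n hmono n le_rfl (T.erase 1) hTe
      rw [hTec] at htop
      have harith : n - (k - 1) + 1 = n - k + 2 := by omega
      rw [harith] at htop
      have hsplitT : ∑ i ∈ T, x i = x 1 + ∑ i ∈ T.erase 1, x i := by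
        rw [← Finset.sum_erase_add T x h1T]; ring
      rw [hsplitT]
      linarith
    have hcard : (n - 1).choose (k - 1) ≤ F.card :=
      choose_le_card n k hk1 hn1 (fun T => 0 ≤ ∑ i ∈ T, x i) hall
    omega
  -- Step 2: the restricted vector and its nonnegative k-sums
  set y : ℕ → ℝ := fun i => x (i + 1) with hy
  have hmapIcc : (Finset.Icc 1 (n - k)).map (addRightEmbedding 1)
      = Finset.Icc 2 (n - k + 1) := by
    rw [Finset.map_add_right_Icc]
  have hysum : 0 ≤ ∑ i ∈ Finset.Icc 1 (n - k), y i := by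
    have : ∑ i ∈ Finset.Icc 1 (n - k), y i = ∑ i ∈ Finset.Icc 2 (n - k + 1), x i := by
      rw [← hmapIcc, Finset.sum_map]
      rfl
    rw [this]; exact hmid
  set F2 : Finset (Finset ℕ) := (Finset.Icc 1 (n - k)).powerset.filter
    (fun A => A ⊆ Finset.Icc 1 (n - k) ∧ A.card = k ∧ 0 ≤ ∑ i ∈ A, y i) with hF2
  have hg : gMMS (n - k) k ≤ F2.card := by
    have hmem : F2.card ∈ {c : ℕ | ∃ y' : ℕ → ℝ, 0 ≤ ∑ i ∈ Finset.Icc 1 (n - k), y' i ∧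
        c = Nat.card {A : Finset ℕ // A ⊆ Finset.Icc 1 (n - k) ∧ A.card = k ∧
          0 ≤ ∑ i ∈ A, y' i}} := by
      refine ⟨y, hysum, ?_⟩
      rw [natCard_eq_filter (n - k) _ (fun T h => h.1)]
    exact Nat.sInf_le hmem
  -- Step 3: map F2 into F via i ↦ i + 1
  set F2' : Finset (Finset ℕ) := F2.image (fun A => A.image (· + 1)) with hF2'
  have hinj1 : Function.Injective (· + 1 : ℕ → ℕ) := fun a b h => by simpa using h
  have hF2'card : F2'.card = F2.card :=
    Finset.card_image_of_injective _ (Finset.image_injective hinj1)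
  have hF2'sub : F2' ⊆ F := by
    intro B hB
    rw [hF2', Finset.mem_image] at hB
    obtain ⟨A, hA, rfl⟩ := hB
    rw [hF2, Finset.mem_filter] at hA
    obtain ⟨-, hAsub, hAcard, hAsum⟩ := hA
    have hBsub : A.image (· + 1) ⊆ Finset.Icc 1 n := by
      intro b hb
      rw [Finset.mem_image] at hb
      obtain ⟨a, ha, rfl⟩ := hb
      have := Finset.mem_Icc.1 (hAsub ha)
      exact Finset.mem_Icc.2 ⟨by omega, by omega⟩
    refine Finset.mem_filter.2 ⟨Finset.mem_powerset.2 hBsub, hBsub, ?_, ?_⟩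
    · rw [Finset.card_image_of_injective _ hinj1, hAcard]
    · rw [Finset.sum_image (fun a _ b _ h => hinj1 h)]
      exact hAsum
  have hF1sub : F1 ⊆ F := by
    intro T hT
    rw [hF1, Finset.mem_filter] at hT
    obtain ⟨hTp, hTsub, hTcard, hTsh⟩ := hT
    refine Finset.mem_filter.2 ⟨hTp, hTsub, hTcard, ?_⟩
    exact le_trans hcon (shift_sum hmono hTsub hS hTsh)
  have hdisj12 : Disjoint F1 F2' := by
    rw [Finset.disjoint_left]
    intro T hT hT2
    rw [hF1, Finset.mem_filter] at hT
    obtain ⟨-, hTsub, -, hTsh⟩ := hT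
    have h1T : 1 ∈ T := one_mem_of_shiftGE hTsub h1 hTsh
    rw [hF2', Finset.mem_image] at hT2
    obtain ⟨A, hA, rfl⟩ := hT2
    rw [Finset.mem_image] at h1T
    obtain ⟨a, ha, hae⟩ := h1T
    rw [hF2, Finset.mem_filter] at hA
    have := Finset.mem_Icc.1 (hA.2.1 ha)
    omega
  -- conclude
  have hunion : F1.card + F2'.card ≤ F.card := by
    rw [← Finset.card_union_of_disjoint hdisj12]
    exact Finset.card_le_card (Finset.union_subset hF1sub hF2'sub)
  omega
end
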